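/- Let X be a real symmetric Banach sequence space and γ a continuous linear functional on X. Then γ is symmetric (γ(x∘σ) = γ(x) for all x ∈ X and permutations σ) if and only if γ(x) = γ(x*) for every x in the positive cone X₊ = {x ∈ X : xₙ ≥ 0 for all n}. -/

import Mathlib

open scoped Classical

/-- A Banach sequence space: a subspace of `ℕ → ℝ` with a complete monotone norm
such that the canonical unit vectors have norm one. -/
structure BanachSeqSpace where
  X : Submodule ℝ (ℕ → ℝ)
  N : (ℕ → ℝ) → ℝ
  N_nonneg : ∀ x ∈ X, 0 ≤ N x
  N_eq_zero : ∀ x ∈ X, N x = 0 → x = 0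
  N_add : ∀ x ∈ X, ∀ y ∈ X, N (x + y) ≤ N x + N y
  N_smul : ∀ (c : ℝ), ∀ x ∈ X, N (c • x) = |c| * N x
  complete : ∀ f : ℕ → ℕ → ℝ, (∀ k, f k ∈ X) →
    (∀ ε : ℝ, 0 < ε → ∃ K, ∀ m ≥ K, ∀ n ≥ K, N (f m - f n) < ε) →
    ∃ x ∈ X, ∀ ε : ℝ, 0 < ε → ∃ K, ∀ k ≥ K, N (f k - x) < ε
  mono_mem : ∀ (x : ℕ → ℝ), ∀ y ∈ X, (∀ n, |x n| ≤ |y n|) → x ∈ X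
  mono_norm : ∀ (x : ℕ → ℝ), ∀ y ∈ X, (∀ n, |x n| ≤ |y n|) → N x ≤ N y
  unit_mem : ∀ k : ℕ, (fun n => if n = k then (1 : ℝ) else 0) ∈ X
  unit_norm : ∀ k : ℕ, N (fun n => if n = k then (1 : ℝ) else 0) = 1

/-- A Banach sequence space is symmetric if it is stable under permutations of the
coordinates, with equal norm. -/
def IsSymmetric (S : BanachSeqSpace) : Prop :=
  ∀ x ∈ S.X, ∀ σ : Equiv.Perm ℕ, (x ∘ σ) ∈ S.X ∧ S.N (x ∘ σ) = S.N x

/-- The decreasing rearrangement of a (bounded) sequence, indexed from 0: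
`dstar x n` is the paper's `x*_(n+1) = inf { sup_{k ∉ J} |x k| : |J| ≤ n }`. -/
noncomputable def dstar (x : ℕ → ℝ) (n : ℕ) : ℝ :=
  sInf {a : ℝ | ∃ J : Finset ℕ, J.card ≤ n ∧ a = sSup {b : ℝ | ∃ k, k ∉ J ∧ b = |x k|}}

/-- The closing up of a sequence: its nonzero terms in order, padded with zeros. -/
noncomputable def closingUp (x : ℕ → ℝ) (n : ℕ) : ℝ :=
  if {k | x k ≠ 0}.Infinite ∨ n < {k | x k ≠ 0}.ncard
  then x (Nat.nth (fun k => x k ≠ 0) n) else 0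

/-- coordinates are bounded by the norm -/
lemma abs_le_norm (S : BanachSeqSpace) (x : ℕ → ℝ) (hx : x ∈ S.X) (k : ℕ) :
    |x k| ≤ S.N x := by
  have h1 : (fun n => if n = k then x k else 0) = (x k) • (fun n => if n = k then (1:ℝ) else 0) := by
    funext n; by_cases h : n = k <;> simp [h]
  have h2 : S.N (fun n => if n = k then x k else 0) = |x k| := by
    rw [h1, S.N_smul _ _ (S.unit_mem k), S.unit_norm k, mul_one]
  have h3 := S.mono_norm (fun n => if n = k then x k else 0) x hx (by
    intro n; by_cases h : n = k <;> simp [h])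
  rw [h2] at h3; exact h3

/-- an infinite subset of ℕ is equivalent to ℕ -/
noncomputable def infEquiv (s : Set ℕ) (hs : s.Infinite) : s ≃ ℕ := by
  have : Infinite s := hs.to_subtype
  exact (nonempty_denumerable ↥s).some.eqv _

/-- key transfer lemma, restricted version: if `y` is obtained from `x` by a
support-bijection and both supports have infinite complement, then `y ∈ X` and
`γ y = γ x`. -/
lemma transfer_aux (S : BanachSeqSpace) (hsym : IsSymmetric S)
    (γ : (ℕ → ℝ) → ℝ)
    (hγ : ∀ x ∈ S.X, ∀ σ : Equiv.Perm ℕ, γ (x ∘ σ) = γ x)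
    (x : ℕ → ℝ) (hx : x ∈ S.X) (y : ℕ → ℝ) (φ : ℕ → ℕ)
    (hinj : Set.InjOn φ {k | x k ≠ 0})
    (hval : ∀ k, x k ≠ 0 → y (φ k) = x k)
    (honto : ∀ n, y n ≠ 0 → ∃ k, x k ≠ 0 ∧ φ k = n)
    (hc1 : ({k | x k ≠ 0}ᶜ).Infinite)
    (hc2 : ({n | y n ≠ 0}ᶜ).Infinite) :
    y ∈ S.X ∧ γ y = γ x := by
  set A : Set ℕ := {k | x k ≠ 0} with hA
  set B : Set ℕ := {n | y n ≠ 0} with hB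
  have himg : B = φ '' A := by
    apply Set.eq_of_subset_of_subset
    · intro n hn
      obtain ⟨k, hk, hkn⟩ := honto n hn
      exact ⟨k, hk, hkn⟩
    · rintro n ⟨k, hk, rfl⟩
      have := hval k hk
      simp only [hB, Set.mem_setOf_eq]
      rw [this]; exact hk
  let e1 : (A : Set ℕ) ≃ (B : Set ℕ) :=
    (Equiv.Set.imageOfInjOn φ A hinj).trans (Equiv.setCongr himg.symm)
  have e1spec : ∀ (k : A), (e1 k : ℕ) = φ (k : ℕ) := by
    intro k; simp [e1, Equiv.Set.imageOfInjOn]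
  have e2 : ↥(Aᶜ) ≃ ↥(Bᶜ) := (infEquiv _ hc1).trans (infEquiv _ hc2).symm
  let σ : Equiv.Perm ℕ :=
    ((Equiv.Set.sumCompl A).symm.trans ((e1.sumCongr e2).trans (Equiv.Set.sumCompl B)))
  have hσ1 : ∀ k, k ∈ A → σ k = φ k := by
    intro k hk
    show (Equiv.Set.sumCompl B) ((e1.sumCongr e2) ((Equiv.Set.sumCompl A).symm k)) = φ k
    rw [Equiv.Set.sumCompl_symm_apply_of_mem hk]
    simp [e1spec ⟨k, hk⟩]
  have hσ2 : ∀ k, k ∉ A → σ k ∉ B := by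
    intro k hk
    show (Equiv.Set.sumCompl B) ((e1.sumCongr e2) ((Equiv.Set.sumCompl A).symm k)) ∉ B
    rw [Equiv.Set.sumCompl_symm_apply_of_notMem hk]
    simp only [Equiv.sumCongr_apply, Sum.map_inr, Equiv.Set.sumCompl_apply_inr]
    exact (e2 ⟨k, hk⟩).2
  have hxy : x = y ∘ σ := by
    funext k
    by_cases hk : k ∈ A
    · simp only [Function.comp_apply, hσ1 k hk]
      exact (hval k hk).symm
    · have h1 : x k = 0 := by simpa [hA] using hk
      have h2 : y (σ k) = 0 := by
        have := hσ2 k hk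
        simpa [hB] using this
      simp [Function.comp_apply, h1, h2]
  have hy : y = x ∘ σ.symm := by
    funext n
    rw [hxy]
    simp
  obtain ⟨hmem, -⟩ := hsym x hx σ.symm
  constructor
  · rw [hy]; exact hmem
  · rw [hy]; exact hγ x hx σ.symm

/-- restriction of a sequence to a set of indices -/
noncomputable def restr (A : Set ℕ) (x : ℕ → ℝ) : ℕ → ℝ :=
  fun k => if k ∈ A then x k else 0

lemma restr_mem (S : BanachSeqSpace) (A : Set ℕ) (x : ℕ → ℝ) (hx : x ∈ S.X) :
    restr A x ∈ S.X := by
  apply S.mono_mem _ x hx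
  intro n
  by_cases h : n ∈ A <;> simp [restr, h, abs_nonneg]

/-- key transfer lemma: if `y` is obtained from `x` by a support-bijection,
then `y ∈ X` and `γ y = γ x`. -/
lemma transfer (S : BanachSeqSpace) (hsym : IsSymmetric S)
    (γ : (ℕ → ℝ) → ℝ)
    (hγ : ∀ x ∈ S.X, ∀ σ : Equiv.Perm ℕ, γ (x ∘ σ) = γ x)
    (hadd : ∀ x ∈ S.X, ∀ y ∈ S.X, γ (x + y) = γ x + γ y)
    (x : ℕ → ℝ) (hx : x ∈ S.X) (y : ℕ → ℝ) (φ : ℕ → ℕ)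
    (hinj : Set.InjOn φ {k | x k ≠ 0})
    (hval : ∀ k, x k ≠ 0 → y (φ k) = x k)
    (honto : ∀ n, y n ≠ 0 → ∃ k, x k ≠ 0 ∧ φ k = n) :
    y ∈ S.X ∧ γ y = γ x := by
  set A : Set ℕ := {k | x k ≠ 0} with hA
  by_cases hAinf : A.Infinite
  · -- split A into two infinite pieces
    have hrange := Nat.range_nth_of_infinite (p := fun k => k ∈ A) hAinf
    set g : ℕ → ℕ := Nat.nth (fun k => k ∈ A) with hg
    have hgsm : StrictMono g := Nat.nth_strictMono (p := fun k => k ∈ A) hAinf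
    set A₁ : Set ℕ := g '' {n | n % 2 = 0} with hA₁
    set A₂ : Set ℕ := A \ A₁ with hA₂
    have hA₁A : A₁ ⊆ A := by
      rintro _ ⟨n, -, rfl⟩
      have : g n ∈ Set.range g := ⟨n, rfl⟩
      rwa [hrange] at this
    have hA₂A : A₂ ⊆ A := fun k hk => hk.1
    have hA₁inf : A₁.Infinite := by
      apply Set.Infinite.image (hgsm.injective.injOn)
      have h1 : Set.range (fun n : ℕ => 2 * n) ⊆ {n : ℕ | n % 2 = 0} := by
        rintro _ ⟨n, rfl⟩; simp [Nat.mul_mod_right]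
      exact Set.Infinite.mono h1 (Set.infinite_range_of_injective (by
        intro a b h; simp only at h; omega))
    have hA₂inf : A₂.Infinite := by
      have hsub : g '' {n | n % 2 = 1} ⊆ A₂ := by
        rintro _ ⟨n, hn, rfl⟩
        constructor
        · have : g n ∈ Set.range g := ⟨n, rfl⟩
          rwa [hrange] at this
        · rintro ⟨m, hm, hmg⟩
          have := hgsm.injective hmg
          simp only [Set.mem_setOf_eq] at hm hn
          omega
      apply Set.Infinite.mono hsub
      apply Set.Infinite.image (hgsm.injective.injOn)
      have h1 : Set.range (fun n : ℕ => 2 * n + 1) ⊆ {n : ℕ | n % 2 = 1} := by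
        rintro _ ⟨n, rfl⟩; simp only [Set.mem_setOf_eq]; omega
      exact Set.Infinite.mono h1 (Set.infinite_range_of_injective (by
        intro a b h; simp only at h; omega))
    have hdisjA : ∀ k, k ∈ A₁ → k ∈ A₂ → False := fun k h1 h2 => h2.2 h1
    have hdisj : ∀ n, n ∈ φ '' A₁ → n ∈ φ '' A₂ → False := by
      rintro n ⟨a, ha, rfl⟩ ⟨b, hb, hba⟩
      have hba' : b = a := hinj (hA₂A hb) (hA₁A ha) hba
      exact hdisjA a ha (hba' ▸ hb)
    -- apply transfer_aux to each piece
    have happ : ∀ (A' : Set ℕ), A' ⊆ A → A'ᶜ.Infinite →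
        ((φ '' A')ᶜ).Infinite →
        restr (φ '' A') y ∈ S.X ∧ γ (restr (φ '' A') y) = γ (restr A' x) := by
      intro A' hsubA hcomp1 hcomp2
      have hx'mem : restr A' x ∈ S.X := restr_mem S A' x hx
      have hsupp : ∀ k, restr A' x k ≠ 0 ↔ k ∈ A' := by
        intro k
        simp only [restr]
        by_cases h : k ∈ A'
        · simp only [h, if_true, iff_true]; exact hsubA h
        · simp [h]
      apply transfer_aux S hsym γ hγ _ hx'mem _ φ
      · intro a ha b hb hab
        exact hinj (hsubA ((hsupp a).mp ha)) (hsubA ((hsupp b).mp hb)) hab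
      · intro k hk
        have hk' : k ∈ A' := (hsupp k).mp hk
        have h1 : φ k ∈ φ '' A' := ⟨k, hk', rfl⟩
        simp only [restr, h1, if_true, hk', if_pos]
        exact hval k (hsubA hk')
      · intro n hn
        simp only [restr] at hn
        by_cases h : n ∈ φ '' A'
        · obtain ⟨k, hk, rfl⟩ := h
          exact ⟨k, (hsupp k).mpr hk, rfl⟩
        · simp [h] at hn
      · have h2 : {k | restr A' x k ≠ 0} = A' := Set.ext hsupp
        rw [h2]; exact hcomp1
      · apply Set.Infinite.mono ?_ hcomp2
        intro n hn
        simp only [Set.mem_compl_iff] at hn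
        simp only [Set.mem_compl_iff, Set.mem_setOf_eq, not_not, restr]
        rw [if_neg hn]
    obtain ⟨hy₁mem, hγ₁⟩ := happ A₁ hA₁A (Set.Infinite.mono (fun k hk => fun hmem => hdisjA k hmem hk)
        hA₂inf) (Set.Infinite.mono (fun n hn => fun hmem => hdisj n hmem hn)
        (Set.Infinite.image (hinj.mono hA₂A) hA₂inf))
    obtain ⟨hy₂mem, hγ₂⟩ := happ A₂ hA₂A (Set.Infinite.mono (fun k hk => fun hmem => hdisjA k hk hmem)
        hA₁inf) (Set.Infinite.mono (fun n hn => fun hmem => hdisj n hn hmem)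
        (Set.Infinite.image (hinj.mono hA₁A) hA₁inf))
    have hx₁mem : restr A₁ x ∈ S.X := restr_mem S A₁ x hx
    have hx₂mem : restr A₂ x ∈ S.X := restr_mem S A₂ x hx
    have hxsum : x = restr A₁ x + restr A₂ x := by
      funext k
      simp only [Pi.add_apply, restr]
      by_cases h1 : k ∈ A₁
      · rw [if_pos h1, if_neg (fun h2 => hdisjA k h1 h2)]; ring
      · by_cases h2 : k ∈ A₂
        · rw [if_neg h1, if_pos h2]; ring
        · rw [if_neg h1, if_neg h2]
          have hk0 : k ∉ A := fun hk => h2 ⟨hk, h1⟩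
          have hk0' : x k = 0 := by simpa [hA] using hk0
          rw [hk0']; ring
    have hysum : y = restr (φ '' A₁) y + restr (φ '' A₂) y := by
      funext n
      simp only [Pi.add_apply, restr]
      by_cases h1 : n ∈ φ '' A₁
      · rw [if_pos h1, if_neg (fun h2 => hdisj n h1 h2)]; ring
      · by_cases h2 : n ∈ φ '' A₂
        · rw [if_neg h1, if_pos h2]; ring
        · rw [if_neg h1, if_neg h2]
          have hn : y n = 0 := by
            by_contra hy0
            obtain ⟨k, hk, rfl⟩ := honto n hy0
            rcases Classical.em (k ∈ A₁) with h | h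
            · exact h1 ⟨k, h, rfl⟩
            · exact h2 ⟨k, ⟨hk, h⟩, rfl⟩
          rw [hn]; ring
    constructor
    · rw [hysum]; exact S.X.add_mem hy₁mem hy₂mem
    · rw [hysum, hxsum, hadd _ hy₁mem _ hy₂mem, hadd _ hx₁mem _ hx₂mem, hγ₁, hγ₂]
  · -- A finite
    have hAfin : A.Finite := Set.not_infinite.mp hAinf
    have hBfin : ({n | y n ≠ 0}).Finite := by
      apply Set.Finite.subset (hAfin.image φ)
      intro n hn
      obtain ⟨k, hk, rfl⟩ := honto n hn
      exact ⟨k, hk, rfl⟩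
    exact transfer_aux S hsym γ hγ x hx y φ hinj hval honto
      hAfin.infinite_compl hBfin.infinite_compl

/-- if the constant sequence 1 belongs to X, every symmetric continuous functional vanishes -/
lemma gamma_eq_zero (S : BanachSeqSpace) (hsym : IsSymmetric S)
    (γ : (ℕ → ℝ) → ℝ)
    (hγ : ∀ x ∈ S.X, ∀ σ : Equiv.Perm ℕ, γ (x ∘ σ) = γ x)
    (hadd : ∀ x ∈ S.X, ∀ y ∈ S.X, γ (x + y) = γ x + γ y)
    (hcont : ∃ C : ℝ, ∀ x ∈ S.X, |γ x| ≤ C * S.N x)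
    (hone : (fun _ : ℕ => (1:ℝ)) ∈ S.X) :
    ∀ z ∈ S.X, γ z = 0 := by
  obtain ⟨C, hC⟩ := hcont
  intro z hz
  -- doubling operator
  set D : (ℕ → ℝ) → (ℕ → ℝ) := fun w n => w (n / 2) with hD
  -- basic step
  have hstep : ∀ w ∈ S.X, D w ∈ S.X ∧ γ (D w) = 2 * γ w := by
    intro w hw
    set E : ℕ → ℝ := fun n => if n % 2 = 0 then w (n / 2) else 0 with hE
    set O : ℕ → ℝ := fun n => if n % 2 = 1 then w (n / 2) else 0 with hO
    have hEt := transfer S hsym γ hγ hadd w hw E (fun k => 2 * k)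
      (fun a _ b _ h => by simp only at h; omega)
      (by intro k hk; simp only [hE]; rw [if_pos (by omega), Nat.mul_div_cancel_left k (by norm_num)])
      (by
        intro n hn
        simp only [hE] at hn
        by_cases h : n % 2 = 0
        · rw [if_pos h] at hn
          exact ⟨n / 2, hn, by show 2 * (n / 2) = n; omega⟩
        · rw [if_neg h] at hn; exact absurd rfl hn)
    have hOt := transfer S hsym γ hγ hadd w hw O (fun k => 2 * k + 1)
      (fun a _ b _ h => by simp only at h; omega)
      (by intro k hk; simp only [hO]; rw [if_pos (by omega)]
          congr 1; omega)
      (by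
        intro n hn
        simp only [hO] at hn
        by_cases h : n % 2 = 1
        · rw [if_pos h] at hn
          exact ⟨n / 2, hn, by show 2 * (n / 2) + 1 = n; omega⟩
        · rw [if_neg h] at hn; exact absurd rfl hn)
    have hsum : D w = E + O := by
      funext n
      simp only [Pi.add_apply, hD, hE, hO]
      rcases Nat.mod_two_eq_zero_or_one n with h | h
      · rw [if_pos h, if_neg (by omega)]; ring
      · rw [if_neg (by omega), if_pos h]; ring
    constructor
    · rw [hsum]; exact S.X.add_mem hEt.1 hOt.1
    · rw [hsum, hadd _ hEt.1 _ hOt.1, hEt.2, hOt.2]; ring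
  -- iterate
  have hbound : ∀ k, |z k| ≤ S.N z := fun k => abs_le_norm S z hz k
  have hiter : ∀ j : ℕ, D^[j] z ∈ S.X ∧ γ (D^[j] z) = 2^j * γ z ∧ ∀ n, |D^[j] z n| ≤ S.N z := by
    intro j
    induction j with
    | zero => exact ⟨hz, by simp, hbound⟩
    | succ j ih =>
      obtain ⟨ih1, ih2, ih3⟩ := ih
      have h1 := hstep _ ih1
      refine ⟨by rw [Function.iterate_succ_apply']; exact h1.1, ?_, ?_⟩
      · rw [Function.iterate_succ_apply', h1.2, ih2]; ring
      · intro n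
        rw [Function.iterate_succ_apply']
        exact ih3 (n / 2)
  -- norm bound
  have hNone : 0 ≤ S.N z := S.N_nonneg z hz
  have hNbound : ∀ j, S.N (D^[j] z) ≤ S.N z * S.N (fun _ => (1:ℝ)) := by
    intro j
    have h1 : (S.N z) • (fun _ : ℕ => (1:ℝ)) ∈ S.X := S.X.smul_mem _ hone
    have h2 := S.mono_norm (D^[j] z) _ h1 (by
      intro n
      have := (hiter j).2.2 n
      simp only [Pi.smul_apply, smul_eq_mul, mul_one]
      rw [abs_of_nonneg hNone]
      exact this)
    rw [S.N_smul _ _ hone, abs_of_nonneg hNone] at h2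
    exact h2
  by_cases hz0 : z = 0
  · have h00 : γ ((fun _ : ℕ => (0:ℝ)) + (fun _ : ℕ => (0:ℝ))) = γ (fun _ : ℕ => (0:ℝ)) + γ (fun _ : ℕ => (0:ℝ)) :=
      hadd _ S.X.zero_mem _ S.X.zero_mem
    have : γ (fun _ : ℕ => (0:ℝ)) = 0 := by
      have heq : ((fun _ : ℕ => (0:ℝ)) + (fun _ : ℕ => (0:ℝ))) = (fun _ : ℕ => (0:ℝ)) := by
        funext n; simp
      rw [heq] at h00; linarith
    rw [hz0]
    convert this using 2
    rfl
  by_contra hne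
  have hNz : 0 < S.N z := by
    rcases lt_or_eq_of_le hNone with h | h
    · exact h
    · exact absurd (S.N_eq_zero z hz h.symm) (by
        intro hc; exact hz0 (by funext n; exact congrFun hc n))
  have habs : 0 < |γ z| := abs_pos.mpr hne
  have hC0 : 0 ≤ C := by
    have h1 := hC z hz
    nlinarith
  set K : ℝ := C * (S.N z * S.N (fun _ => (1:ℝ))) with hK
  have hlt : ∀ j : ℕ, (2:ℝ)^j * |γ z| ≤ K := by
    intro j
    have h1 := hC _ (hiter j).1
    rw [(hiter j).2.1, abs_mul, abs_of_nonneg (by positivity : (0:ℝ) ≤ (2:ℝ)^j)] at h1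
    calc (2:ℝ)^j * |γ z| ≤ C * S.N (D^[j] z) := h1
      _ ≤ K := by
          rw [hK]
          exact mul_le_mul_of_nonneg_left (hNbound j) hC0
  obtain ⟨j, hj⟩ := pow_unbounded_of_one_lt (K / |γ z|) (by norm_num : (1:ℝ) < 2)
  have : K < (2:ℝ)^j * |γ z| := by
    rw [div_lt_iff₀ habs] at hj
    linarith
  linarith [hlt j]

/-- dstar of a nonnegative sequence, without absolute values -/
lemma dstar_of_nonneg (x : ℕ → ℝ) (hx : ∀ n, 0 ≤ x n) (n : ℕ) :
    dstar x n = sInf {a : ℝ | ∃ J : Finset ℕ, J.card ≤ n ∧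
      a = sSup {b : ℝ | ∃ k, k ∉ J ∧ b = x k}} := by
  have hset : ∀ J : Finset ℕ, {b : ℝ | ∃ k, k ∉ J ∧ b = |x k|} =
      {b : ℝ | ∃ k, k ∉ J ∧ b = x k} := by
    intro J; ext b
    apply exists_congr; intro k
    rw [abs_of_nonneg (hx k)]
  unfold dstar
  congr 1
  ext a
  constructor <;> rintro ⟨J, hJ, rfl⟩ <;> exact ⟨J, hJ, by rw [hset J]⟩

section ranking

variable (x : ℕ → ℝ)

/-- the set of indices "before" k in the sorted order -/
def Pset (k : ℕ) : Set ℕ := {l | x k < x l ∨ (x l = x k ∧ l < k)}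

/-- the rank of an index in the sorted order -/
noncomputable def rnk (k : ℕ) : ℕ := (Pset x k).ncard

variable {x}

lemma Pset_not_self (k : ℕ) : k ∉ Pset x k := by
  intro h
  rcases h with h | ⟨-, h⟩
  · exact lt_irrefl _ h
  · exact lt_irrefl _ h

lemma Pset_nonzero (hx : ∀ n, 0 ≤ x n) {k l : ℕ} (hk : x k ≠ 0) (hl : l ∈ Pset x k) :
    x l ≠ 0 := by
  have hk' : 0 < x k := lt_of_le_of_ne (hx k) (Ne.symm hk)
  rcases hl with h | ⟨h, -⟩
  · exact ne_of_gt (lt_trans hk' h)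
  · rw [h]; exact hk

lemma Pset_finite (hx : ∀ n, 0 ≤ x n) (hfin : ∀ t : ℝ, 0 < t → {k | t < x k}.Finite)
    {k : ℕ} (hk : x k ≠ 0) : (Pset x k).Finite := by
  have hk' : 0 < x k := lt_of_le_of_ne (hx k) (Ne.symm hk)
  apply Set.Finite.subset ((hfin (x k) hk').union (Set.finite_Iio k))
  rintro l (h | ⟨-, h⟩)
  · exact Or.inl h
  · exact Or.inr h

lemma Pset_trans {k l m : ℕ} (hlm : l ∈ Pset x m) (hmk : m ∈ Pset x k) :
    l ∈ Pset x k := by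
  rcases hlm with h1 | ⟨h1, h1'⟩ <;> rcases hmk with h2 | ⟨h2, h2'⟩
  · exact Or.inl (lt_trans h2 h1)
  · exact Or.inl (h2 ▸ h1)
  · exact Or.inl (h1 ▸ h2)
  · exact Or.inr ⟨h1.trans h2, by omega⟩

lemma rnk_lt (hx : ∀ n, 0 ≤ x n) (hfin : ∀ t : ℝ, 0 < t → {k | t < x k}.Finite)
    {k l : ℕ} (hk : x k ≠ 0) (hl : l ∈ Pset x k) : rnk x l < rnk x k := by
  have hsub : insert l (Pset x l) ⊆ Pset x k := by
    intro m hm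
    rcases Set.mem_insert_iff.mp hm with rfl | hm
    · exact hl
    · exact Pset_trans hm hl
  have h1 : (insert l (Pset x l)).ncard = rnk x l + 1 :=
    Set.ncard_insert_of_notMem (Pset_not_self l)
      (Pset_finite hx hfin (Pset_nonzero hx hk hl))
  have h2 : (insert l (Pset x l)).ncard ≤ rnk x k :=
    Set.ncard_le_ncard hsub (Pset_finite hx hfin hk)
  omega

lemma rnk_injOn (hx : ∀ n, 0 ≤ x n) (hfin : ∀ t : ℝ, 0 < t → {k | t < x k}.Finite) :
    Set.InjOn (rnk x) {k | x k ≠ 0} := by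
  intro k hk l hl hkl
  by_contra hne
  have : k ∈ Pset x l ∨ l ∈ Pset x k := by
    rcases lt_trichotomy (x k) (x l) with h | h | h
    · exact Or.inr (Or.inl h)
    · rcases lt_or_gt_of_ne hne with h' | h'
      · exact Or.inl (Or.inr ⟨h, h'⟩)
      · exact Or.inr (Or.inr ⟨h.symm, h'⟩)
    · exact Or.inl (Or.inl h)
  rcases this with h | h
  · exact absurd hkl (by have := rnk_lt hx hfin hl h; omega)
  · exact absurd hkl (by have := rnk_lt hx hfin hk h; omega)

lemma rnk_surj (hx : ∀ n, 0 ≤ x n) (hfin : ∀ t : ℝ, 0 < t → {k | t < x k}.Finite)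
    {k : ℕ} (hk : x k ≠ 0) {j : ℕ} (hj : j < rnk x k) :
    ∃ l, x l ≠ 0 ∧ rnk x l = j := by
  have hPfin := Pset_finite hx hfin hk
  set Q : Finset ℕ := insert k hPfin.toFinset with hQ
  have hQcard : Q.card = rnk x k + 1 := by
    rw [hQ, Finset.card_insert_of_notMem (by
      rw [Set.Finite.mem_toFinset]; exact Pset_not_self k)]
    congr 1
    rw [rnk, Set.ncard_eq_toFinset_card _ hPfin]
  have hQsupp : ∀ l ∈ Q, x l ≠ 0 := by
    intro l hl
    rcases Finset.mem_insert.mp hl with rfl | hl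
    · exact hk
    · exact Pset_nonzero hx hk (hPfin.mem_toFinset.mp hl)
  have himg : Finset.image (rnk x) Q = Finset.range (rnk x k + 1) := by
    apply Finset.eq_of_subset_of_card_le
    · intro j hj
      obtain ⟨l, hl, rfl⟩ := Finset.mem_image.mp hj
      rw [Finset.mem_range]
      rcases Finset.mem_insert.mp hl with rfl | hl
      · omega
      · have := rnk_lt hx hfin hk (hPfin.mem_toFinset.mp hl)
        omega
    · rw [Finset.card_range, Finset.card_image_of_injOn (fun a ha b hb hab =>
        rnk_injOn hx hfin (hQsupp a ha) (hQsupp b hb) hab), hQcard]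
  have : j ∈ Finset.image (rnk x) Q := by
    rw [himg, Finset.mem_range]; omega
  obtain ⟨l, hl, hlj⟩ := Finset.mem_image.mp this
  exact ⟨l, hQsupp l hl, hlj⟩

end ranking

section dstarlemmas

variable {x : ℕ → ℝ} {M : ℝ}

lemma sup_set_nonempty (J : Finset ℕ) :
    {b : ℝ | ∃ k, k ∉ J ∧ b = x k}.Nonempty := by
  obtain ⟨k, hk⟩ := Infinite.exists_notMem_finset J
  exact ⟨x k, k, hk, rfl⟩

lemma sup_set_bddAbove (hM : ∀ k, x k ≤ M) (J : Finset ℕ) :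
    BddAbove {b : ℝ | ∃ k, k ∉ J ∧ b = x k} := by
  refine ⟨M, ?_⟩
  rintro b ⟨k, -, rfl⟩
  exact hM k

lemma sup_set_nonneg (hx : ∀ n, 0 ≤ x n) (hM : ∀ k, x k ≤ M) (J : Finset ℕ) :
    0 ≤ sSup {b : ℝ | ∃ k, k ∉ J ∧ b = x k} := by
  obtain ⟨k, hk⟩ := Infinite.exists_notMem_finset J
  exact le_trans (hx k) (le_csSup (sup_set_bddAbove hM J) ⟨k, hk, rfl⟩)

lemma inf_set_nonempty (n : ℕ) :
    {a : ℝ | ∃ J : Finset ℕ, J.card ≤ n ∧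
      a = sSup {b : ℝ | ∃ k, k ∉ J ∧ b = x k}}.Nonempty :=
  ⟨sSup {b : ℝ | ∃ k, k ∉ (∅ : Finset ℕ) ∧ b = x k}, ∅, by simp, rfl⟩

lemma inf_set_bddBelow (hx : ∀ n, 0 ≤ x n) (hM : ∀ k, x k ≤ M) (n : ℕ) :
    BddBelow {a : ℝ | ∃ J : Finset ℕ, J.card ≤ n ∧
      a = sSup {b : ℝ | ∃ k, k ∉ J ∧ b = x k}} := by
  refine ⟨0, ?_⟩
  rintro a ⟨J, -, rfl⟩
  exact sup_set_nonneg hx hM J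

lemma dstar_nonneg (hx : ∀ n, 0 ≤ x n) (hM : ∀ k, x k ≤ M) (n : ℕ) :
    0 ≤ dstar x n := by
  rw [dstar_of_nonneg x hx n]
  apply le_csInf (inf_set_nonempty (x := x) _)
  rintro a ⟨J, -, rfl⟩
  exact sup_set_nonneg hx hM J

lemma dstar_le (hx : ∀ n, 0 ≤ x n) (hM : ∀ k, x k ≤ M) (hM0 : 0 ≤ M) (n : ℕ) :
    dstar x n ≤ M := by
  rw [dstar_of_nonneg x hx n]
  have h1 : sInf {a : ℝ | ∃ J : Finset ℕ, J.card ≤ n ∧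
      a = sSup {b : ℝ | ∃ k, k ∉ J ∧ b = x k}} ≤
      sSup {b : ℝ | ∃ k, k ∉ (∅ : Finset ℕ) ∧ b = x k} :=
    csInf_le (inf_set_bddBelow hx hM n) ⟨∅, by simp, rfl⟩
  apply le_trans h1
  apply csSup_le (sup_set_nonempty ∅)
  rintro b ⟨k, -, rfl⟩
  exact hM k

/-- the value of dstar at the rank of a nonzero entry -/
lemma dstar_rnk (hx : ∀ n, 0 ≤ x n) (hfin : ∀ t : ℝ, 0 < t → {k | t < x k}.Finite)
    (hM : ∀ k, x k ≤ M) {k : ℕ} (hk : x k ≠ 0) : dstar x (rnk x k) = x k := by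
  have hPfin := Pset_finite hx hfin hk
  set J₀ : Finset ℕ := hPfin.toFinset with hJ₀
  have hJ₀card : J₀.card = rnk x k := by
    rw [hJ₀, rnk, Set.ncard_eq_toFinset_card _ hPfin]
  rw [dstar_of_nonneg x hx]
  apply le_antisymm
  · -- dstar ≤ x k, witness J₀
    have hsup : sSup {b : ℝ | ∃ l, l ∉ J₀ ∧ b = x l} = x k := by
      apply le_antisymm
      · refine csSup_le ⟨x k, k, by rw [hJ₀, Set.Finite.mem_toFinset]; exact Pset_not_self k, rfl⟩ ?_
        rintro b ⟨l, hl, rfl⟩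
        rw [hJ₀, Set.Finite.mem_toFinset] at hl
        by_contra hcon
        push_neg at hcon
        exact hl (Or.inl hcon)
      · exact le_csSup (sup_set_bddAbove hM J₀)
          ⟨k, by rw [hJ₀, Set.Finite.mem_toFinset]; exact Pset_not_self k, rfl⟩
    apply csInf_le (inf_set_bddBelow hx hM _)
    exact ⟨J₀, le_of_eq hJ₀card, hsup.symm⟩
  · -- x k ≤ dstar
    apply le_csInf (inf_set_nonempty (x := x) _)
    rintro a ⟨J, hJcard, rfl⟩
    -- find l ∈ insert k (Pset x k) with l ∉ J
    have hQcard : (insert k J₀).card = rnk x k + 1 := by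
      rw [Finset.card_insert_of_notMem (by
        rw [hJ₀, Set.Finite.mem_toFinset]; exact Pset_not_self k), hJ₀card]
    have : ∃ l, l ∈ insert k J₀ ∧ l ∉ J := by
      by_contra hcon
      push_neg at hcon
      have hsub : insert k J₀ ⊆ J := fun l hl => hcon l hl
      have := Finset.card_le_card hsub
      omega
    obtain ⟨l, hl, hlJ⟩ := this
    have hxl : x k ≤ x l := by
      rcases Finset.mem_insert.mp hl with rfl | hl
      · exact le_refl _
      · rw [hJ₀, Set.Finite.mem_toFinset] at hl
        rcases hl with h | ⟨h, -⟩
        · exact le_of_lt h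
        · exact le_of_eq h.symm
    exact le_trans hxl (le_csSup (sup_set_bddAbove hM J) ⟨l, hlJ, rfl⟩)

/-- dstar vanishes off the range of the rank function -/
lemma dstar_off_range (hx : ∀ n, 0 ≤ x n) (hfin : ∀ t : ℝ, 0 < t → {k | t < x k}.Finite)
    (hM : ∀ k, x k ≤ M) {n : ℕ} (hn : ∀ k, x k ≠ 0 → rnk x k ≠ n) : dstar x n = 0 := by
  -- all ranks are < n, so the support is finite with at most n elements
  have hrk : ∀ k, x k ≠ 0 → rnk x k < n := by
    intro k hk
    rcases lt_trichotomy (rnk x k) n with h | h | h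
    · exact h
    · exact absurd h (hn k hk)
    · obtain ⟨l, hl, hlr⟩ := rnk_surj hx hfin hk h
      exact absurd hlr (hn l hl)
  have himg : (rnk x) '' {k | x k ≠ 0} ⊆ Set.Iio n := by
    rintro _ ⟨k, hk, rfl⟩
    exact hrk k hk
  have hsuppfin : {k | x k ≠ 0}.Finite :=
    Set.Finite.of_finite_image (Set.Finite.subset (Set.finite_Iio n) himg)
      (rnk_injOn hx hfin)
  have hcard : hsuppfin.toFinset.card ≤ n := by
    have h1 : {k | x k ≠ 0}.ncard = ((rnk x) '' {k | x k ≠ 0}).ncard :=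
      (Set.ncard_image_of_injOn (rnk_injOn hx hfin)).symm
    have h2 : ((rnk x) '' {k | x k ≠ 0}).ncard ≤ (Set.Iio n).ncard :=
      Set.ncard_le_ncard himg (Set.finite_Iio n)
    have h3 : (Set.Iio n : Set ℕ).ncard = n := by
      rw [← Finset.coe_range, Set.ncard_coe_finset, Finset.card_range]
    rw [← Set.ncard_eq_toFinset_card _ hsuppfin]
    omega
  rw [dstar_of_nonneg x hx]
  apply le_antisymm
  · have hsup : sSup {b : ℝ | ∃ l, l ∉ hsuppfin.toFinset ∧ b = x l} ≤ 0 := by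
      apply csSup_le (sup_set_nonempty _)
      rintro b ⟨l, hl, rfl⟩
      rw [Set.Finite.mem_toFinset] at hl
      simp only [Set.mem_setOf_eq, not_not] at hl
      rw [hl]
    exact le_trans (csInf_le (inf_set_bddBelow hx hM n)
      ⟨hsuppfin.toFinset, hcard, rfl⟩) hsup
  · apply le_csInf (inf_set_nonempty (x := x) _)
    rintro a ⟨J, -, rfl⟩
    exact sup_set_nonneg hx hM J

end dstarlemmas


/-- one-sided inclusion for the dstar defining sets under permutation -/
lemma Sset_subset (y : ℕ → ℝ) (σ : Equiv.Perm ℕ) (n : ℕ) :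
    {a : ℝ | ∃ J : Finset ℕ, J.card ≤ n ∧ a = sSup {b : ℝ | ∃ k, k ∉ J ∧ b = |y k|}} ⊆
    {a : ℝ | ∃ J : Finset ℕ, J.card ≤ n ∧
      a = sSup {b : ℝ | ∃ k, k ∉ J ∧ b = |(y ∘ σ) k|}} := by
  rintro a ⟨J, hJ, rfl⟩
  refine ⟨J.image σ.symm,
    le_trans (le_of_eq (Finset.card_image_of_injective J σ.symm.injective)) hJ, ?_⟩
  congr 1
  ext b
  constructor
  · rintro ⟨k, hk, rfl⟩
    refine ⟨σ.symm k, ?_, by simp⟩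
    intro hmem
    obtain ⟨j, hj, hje⟩ := Finset.mem_image.mp hmem
    have : j = k := σ.symm.injective hje
    exact hk (this ▸ hj)
  · rintro ⟨k, hk, rfl⟩
    refine ⟨σ k, ?_, by simp⟩
    intro hmem
    exact hk (Finset.mem_image.mpr ⟨σ k, hmem, by simp⟩)

/-- dstar is invariant under permutations -/
lemma dstar_comp_perm (y : ℕ → ℝ) (σ : Equiv.Perm ℕ) : dstar (y ∘ σ) = dstar y := by
  funext n
  unfold dstar
  congr 1
  apply Set.Subset.antisymm
  · have h1 := Sset_subset (y ∘ σ) σ.symm n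
    have h2 : (y ∘ ⇑σ) ∘ ⇑σ.symm = y := by funext m; simp
    rwa [h2] at h1
  · exact Sset_subset y σ n

/-- A continuous linear functional on a real symmetric Banach sequence space is
symmetric iff `γ x = γ x*` for every `x` in the positive cone. -/
theorem symmetric_iff_rearrangement_on_positive_cone (S : BanachSeqSpace)
    (hsym : IsSymmetric S)
    (γ : (ℕ → ℝ) → ℝ)
    (hadd : ∀ x ∈ S.X, ∀ y ∈ S.X, γ (x + y) = γ x + γ y)
    (hsmul : ∀ (c : ℝ), ∀ x ∈ S.X, γ (c • x) = c * γ x)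
    (hcont : ∃ C : ℝ, ∀ x ∈ S.X, |γ x| ≤ C * S.N x) :
    (∀ x ∈ S.X, ∀ σ : Equiv.Perm ℕ, γ (x ∘ σ) = γ x) ↔
      (∀ x ∈ S.X, (∀ n, 0 ≤ x n) → γ x = γ (dstar x)) := by
  constructor
  · -- symmetric implies rearrangement-invariant on the positive cone
    intro hγ x hx hpos
    have hM : ∀ k, x k ≤ S.N x := by
      intro k
      have := abs_le_norm S x hx k
      rwa [abs_of_nonneg (hpos k)] at this
    by_cases hfin : ∀ t : ℝ, 0 < t → {k | t < x k}.Finite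
    · -- all level sets finite: dstar is a genuine rearrangement of x
      obtain ⟨hmem, heq⟩ := transfer S hsym γ hγ hadd x hx (dstar x) (rnk x)
        (rnk_injOn hpos hfin)
        (fun k hk => dstar_rnk hpos hfin hM hk)
        (by
          intro n hn
          by_contra hcon
          push_neg at hcon
          exact hn (dstar_off_range hpos hfin hM hcon))
      exact heq.symm
    · -- some level set is infinite: the constant sequence is in X and γ ≡ 0
      push_neg at hfin
      obtain ⟨t, ht, hinf⟩ := hfin
      have hinf' : {k | t < x k}.Infinite := hinf
      set A : Set ℕ := {k | t < x k} with hA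
      set p : ℕ → Prop := fun k => t < x k with hp
      have hAp : A = setOf p := rfl
      set v : ℕ → ℝ := fun n => x (Nat.nth p n) with hv
      have hsupp : ∀ k, restr A x k ≠ 0 ↔ k ∈ A := by
        intro k
        simp only [restr]
        by_cases h : k ∈ A
        · simp only [h, if_true, iff_true]
          have : t < x k := h
          intro hc; rw [hc] at this; linarith
        · simp [h]
      have hx₁mem : restr A x ∈ S.X := restr_mem S A x hx
      obtain ⟨hvmem, -⟩ := transfer S hsym γ hγ hadd (restr A x) hx₁mem v (Nat.count p)
        (by
          intro a ha b hb h
          have hpa : p a := (hsupp a).mp ha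
          have hpb : p b := (hsupp b).mp hb
          have h1 := Nat.nth_count hpa
          have h2 := Nat.nth_count hpb
          rw [← h1, ← h2, h]
        )
        (by
          intro k hk
          have hpk : p k := (hsupp k).mp hk
          simp only [hv, restr]
          rw [Nat.nth_count hpk, if_pos ((hsupp k).mp hk : k ∈ A)]
        )
        (by
          intro n hn
          have hpn : p (Nat.nth p n) := Nat.nth_mem_of_infinite (by exact hinf') n
          refine ⟨Nat.nth p n, (hsupp _).mpr hpn, ?_⟩
          exact Nat.count_nth (fun hf => absurd hf (by exact hinf'))
        )
      have hone : (fun _ : ℕ => (1:ℝ)) ∈ S.X := by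
        apply S.mono_mem _ (t⁻¹ • v) (S.X.smul_mem _ hvmem)
        intro n
        have hvn : t < v n := Nat.nth_mem_of_infinite (p := p) hinf' n
        have h1 : (1:ℝ) ≤ t⁻¹ * v n := by
          rw [← inv_mul_cancel₀ (ne_of_gt ht)]
          exact mul_le_mul_of_nonneg_left (le_of_lt hvn) (by positivity)
        simp only [Pi.smul_apply, smul_eq_mul]
        rw [abs_of_nonneg (by norm_num : (0:ℝ) ≤ 1), abs_of_nonneg (by nlinarith)]
        exact h1
      have hz := gamma_eq_zero S hsym γ hγ hadd hcont hone
      have hdmem : dstar x ∈ S.X := by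
        apply S.mono_mem _ ((S.N x) • (fun _ : ℕ => (1:ℝ))) (S.X.smul_mem _ hone)
        intro n
        have h1 := dstar_nonneg hpos hM n
        have h2 := dstar_le hpos hM (S.N_nonneg x hx) n
        have h3 := S.N_nonneg x hx
        simp only [Pi.smul_apply, smul_eq_mul, mul_one]
        rw [abs_of_nonneg h1, abs_of_nonneg h3]
        exact h2
      rw [hz x hx, hz (dstar x) hdmem]
  · -- rearrangement-invariant on the positive cone implies symmetric
    intro hstar x hx σ
    have hxp : (fun n => max (x n) 0) ∈ S.X := S.mono_mem _ x hx (fun n => by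
      rw [abs_of_nonneg (le_max_right _ _)]
      exact max_le (le_abs_self _) (abs_nonneg _))
    have hxm : (fun n => max (-(x n)) 0) ∈ S.X := S.mono_mem _ x hx (fun n => by
      rw [abs_of_nonneg (le_max_right _ _)]
      exact max_le (neg_le_abs _) (abs_nonneg _))
    have hid : ∀ y : ℕ → ℝ, (fun n => max (y n) 0) = y + (fun n => max (-(y n)) 0) := by
      intro y; funext n
      simp only [Pi.add_apply]
      rcases le_total (y n) 0 with h | h
      · rw [max_eq_right h, max_eq_left (by linarith)]; ring
      · rw [max_eq_left h, max_eq_right (by linarith)]; ring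
    have key : ∀ y ∈ S.X, (∀ n, 0 ≤ y n) → γ (y ∘ σ) = γ y := by
      intro y hy hposy
      have h1 := hstar (y ∘ ⇑σ) ((hsym y hy σ).1) (fun n => hposy (σ n))
      have h2 := hstar y hy hposy
      rw [h1, dstar_comp_perm y σ, ← h2]
    have hxσ : (x ∘ ⇑σ) ∈ S.X := (hsym x hx σ).1
    have hxmσ : ((fun n => max (-(x n)) 0) ∘ ⇑σ) ∈ S.X := (hsym _ hxm σ).1
    have e1 : γ (fun n => max (x n) 0) = γ x + γ (fun n => max (-(x n)) 0) := by
      rw [hid x]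
      exact hadd x hx _ hxm
    have e2 : γ ((fun n => max (x n) 0) ∘ ⇑σ) = γ (x ∘ ⇑σ) +
        γ ((fun n => max (-(x n)) 0) ∘ ⇑σ) := by
      have hcomp : ((fun n => max (x n) 0) ∘ ⇑σ) =
          (x ∘ ⇑σ) + ((fun n => max (-(x n)) 0) ∘ ⇑σ) := by
        funext n
        simp only [Function.comp_apply, Pi.add_apply]
        rcases le_total (x (σ n)) 0 with h | h
        · rw [max_eq_right h, max_eq_left (by linarith)]; ring
        · rw [max_eq_left h, max_eq_right (by linarith)]; ring
      rw [hcomp]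
      exact hadd _ hxσ _ hxmσ
    have e3 : γ ((fun n => max (x n) 0) ∘ ⇑σ) = γ (fun n => max (x n) 0) :=
      key _ hxp (fun n => le_max_right _ _)
    have e4 : γ ((fun n => max (-(x n)) 0) ∘ ⇑σ) = γ (fun n => max (-(x n)) 0) :=
      key _ hxm (fun n => le_max_right _ _)
    linarith [e1, e2, e3, e4]
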